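/- Let L, M, N ⊆ [m] with N a proper subset of [m] and with L, M, N not all empty, and let C = C(Δ_L, Δ_M, Δ_N^c). Then C is a binary linear code of length (2^m − 2^{|N|})·2^{|L|+|M|}, dimension m + |L| + |M|, and minimum distance (2^m − 2^{|N|})·2^{|L|+|M|−1}; its weight enumerator equals 1 + (2^{m+|L|+|M|} − 2^{m−|N|})·X^{(2^m − 2^{|N|})·2^{|L|+|M|−1}} + (2^{m−|N|} − 1)·X^{2^{m+|L|+|M|−1}}; and C is a Griesmer code, i.e., Σ_{i=0}^{k−1} ⌈d/2^i⌉ = n for these n, k, d. -/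

import Mathlib

open Finset Polynomial
open scoped Classical

/-- `V m` is the vector space `F₂^m`. -/
abbrev V (m : ℕ) := Fin m → ZMod 2

/-- Dot product `x·y = Σ_i x_i y_i` in `F₂`. -/
def dot {m : ℕ} (x y : V m) : ZMod 2 := ∑ i, x i * y i

/-- `Supp v = {i : v i ≠ 0}`. -/
def supp {m : ℕ} (v : V m) : Finset (Fin m) := Finset.univ.filter fun i => v i ≠ 0

/-- The simplicial complex `Δ_L = {v : Supp v ⊆ L}` generated by `L`. -/
def Δ {m : ℕ} (L : Finset (Fin m)) : Finset (V m) := Finset.univ.filter fun v => supp v ⊆ L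

/-- Hamming weight of a vector. -/
def wtv {ι : Type} [Fintype ι] (c : ι → ZMod 2) : ℕ :=
  (Finset.univ.filter fun i => c i ≠ 0).card

/-- The linear functional `x ↦ x·y`. -/
noncomputable def dotL {m : ℕ} (y : V m) : V m →ₗ[ZMod 2] ZMod 2 :=
  ∑ i, LinearMap.smulRight (LinearMap.proj i) (y i)

/-- The linear map `(α,β,γ) ↦ ((d₁,d₂,d₃) ↦ α·d₁ + (β+γ)·d₂ + β·d₃)` whose range is the
binary code `C(D₁,D₂,D₃)`. -/
noncomputable def codeMap {m : ℕ} (D₁ D₂ D₃ : Finset (V m)) :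
    (V m × V m × V m) →ₗ[ZMod 2]
      (({x // x ∈ D₁} × {x // x ∈ D₂} × {x // x ∈ D₃}) → ZMod 2) :=
  LinearMap.pi fun d =>
    (dotL d.1.1).comp (LinearMap.fst (ZMod 2) (V m) (V m × V m))
    + (dotL d.2.1.1).comp
        (((LinearMap.fst (ZMod 2) (V m) (V m)).comp (LinearMap.snd (ZMod 2) (V m) (V m × V m)))
          + ((LinearMap.snd (ZMod 2) (V m) (V m)).comp (LinearMap.snd (ZMod 2) (V m) (V m × V m))))
    + (dotL d.2.2.1).comp
        ((LinearMap.fst (ZMod 2) (V m) (V m)).comp (LinearMap.snd (ZMod 2) (V m) (V m × V m)))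

lemma codeMap_apply {m : ℕ} (D₁ D₂ D₃ : Finset (V m)) (α β γ : V m)
    (d : {x // x ∈ D₁} × {x // x ∈ D₂} × {x // x ∈ D₃}) :
    codeMap D₁ D₂ D₃ (α, β, γ) d = dot α d.1.1 + dot (β + γ) d.2.1.1 + dot β d.2.2.1 := by
  simp [codeMap, dotL, dot, LinearMap.smulRight, mul_comm]

lemma zmod2_cases (a : ZMod 2) : a = 0 ∨ a = 1 := by revert a; decide

lemma zmod2_add_self (a b : ZMod 2) : a + b + b = a := by revert a b; decide

lemma zmod2_ne_zero {a : ZMod 2} : a ≠ 0 ↔ a = 1 := by revert a; decide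

lemma mem_Δ {m : ℕ} {L : Finset (Fin m)} {v : V m} : v ∈ Δ L ↔ ∀ i ∉ L, v i = 0 := by
  rw [Δ, Finset.mem_filter]
  simp only [supp, Finset.mem_filter, Finset.mem_univ, true_and]
  constructor
  · intro h i hi
    by_contra hv
    exact hi (h (Finset.mem_filter.2 ⟨Finset.mem_univ i, hv⟩))
  · intro h i hi
    rcases Finset.mem_filter.1 hi with ⟨-, hv⟩
    by_contra hL
    exact hv (h i hL)

lemma dot_add_left {m : ℕ} (x y z : V m) : dot (x + y) z = dot x z + dot y z := by
  simp [dot, add_mul, Finset.sum_add_distrib]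

lemma dot_add_right {m : ℕ} (x y z : V m) : dot x (y + z) = dot x y + dot x z := by
  simp [dot, mul_add, Finset.sum_add_distrib]

lemma dot_zero_left {m : ℕ} (z : V m) : dot 0 z = 0 := by simp [dot]

/-- single-support vector -/
def sv {m : ℕ} (j : Fin m) : V m := fun i => if i = j then 1 else 0

lemma dot_sv {m : ℕ} (x : V m) (j : Fin m) : dot x (sv j) = x j := by
  simp [dot, sv]

lemma sv_mem_Δ {m : ℕ} {L : Finset (Fin m)} {j : Fin m} (hj : j ∈ L) : sv j ∈ Δ L := by
  rw [mem_Δ]; intro i hi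
  simp only [sv, ite_eq_right_iff]
  intro h; exact absurd (h ▸ hj) hi

lemma dot_eq_zero_of {m : ℕ} {S : Finset (Fin m)} {x v : V m}
    (hx : ∀ i ∈ S, x i = 0) (hv : v ∈ Δ S) : dot x v = 0 := by
  rw [mem_Δ] at hv
  refine Finset.sum_eq_zero fun i _ => ?_
  by_cases h : i ∈ S
  · rw [hx i h, zero_mul]
  · rw [hv i h, mul_zero]

lemma card_Δ {m : ℕ} (S : Finset (Fin m)) : (Δ S).card = 2 ^ S.card := by
  have : (Δ S).card = Fintype.card ({ x // x ∈ S } → ZMod 2) := by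
    refine Finset.card_nbij' (fun v => fun i => v i.1)
      (fun f => fun i => if h : i ∈ S then f ⟨i, h⟩ else 0) ?_ ?_ ?_ ?_
    · intro v hv; exact Finset.mem_univ _
    · intro f hf
      rw [Finset.mem_coe, mem_Δ]; intro i hi; simp [hi]
    · intro v hv
      funext i
      by_cases h : i ∈ S
      · simp [h]
      · simp [h, (mem_Δ.1 hv) i h]
    · intro f hf
      funext i
      simp [i.2]
  rw [this, Fintype.card_fun, Fintype.card_coe]
  simp

lemma Δ_univ {m : ℕ} : Δ (Finset.univ : Finset (Fin m)) = Finset.univ := by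
  ext v; simp [mem_Δ]

/-- key counting lemma: if the functional `dot x` is nonzero on `Δ S`, each fiber has size
`2^(|S|-1)`. -/
lemma card_Δ_filter_dot {m : ℕ} {S : Finset (Fin m)} {x : V m}
    (hx : ∃ i ∈ S, x i ≠ 0) (t : ZMod 2) :
    ((Δ S).filter fun v => dot x v = t).card = 2 ^ (S.card - 1) := by
  obtain ⟨j, hjS, hxj⟩ := hx
  have hxj1 : x j = 1 := (zmod2_cases (x j)).resolve_left hxj
  -- bijection between fiber t and fiber t+1
  have key : ∀ t : ZMod 2, ((Δ S).filter fun v => dot x v = t).card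
      = ((Δ S).filter fun v => dot x v = t + 1).card := by
    intro t
    refine Finset.card_nbij' (fun v => v + sv j) (fun v => v + sv j) ?_ ?_ ?_ ?_
    · intro v hv
      rcases Finset.mem_filter.1 hv with ⟨hv1, hv2⟩
      refine Finset.mem_filter.2 ⟨?_, ?_⟩
      · rw [mem_Δ] at hv1 ⊢
        intro i hi
        have := sv_mem_Δ hjS
        rw [mem_Δ] at this
        simp [Pi.add_apply, hv1 i hi, this i hi]
      · rw [dot_add_right, dot_sv, hv2, hxj1]
    · intro v hv
      rcases Finset.mem_filter.1 hv with ⟨hv1, hv2⟩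
      refine Finset.mem_filter.2 ⟨?_, ?_⟩
      · rw [mem_Δ] at hv1 ⊢
        intro i hi
        have := sv_mem_Δ hjS
        rw [mem_Δ] at this
        simp [Pi.add_apply, hv1 i hi, this i hi]
      · rw [dot_add_right, dot_sv, hv2, hxj1]
        exact zmod2_add_self t 1
    · intro v hv
      funext i
      exact zmod2_add_self (v i) (sv j i)
    · intro v hv
      funext i
      exact zmod2_add_self (v i) (sv j i)
  have hsplit : ((Δ S).filter fun v => dot x v = 0).card
      + ((Δ S).filter fun v => dot x v = 1).card = 2 ^ S.card := by
    rw [← card_Δ S,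
      ← Finset.card_filter_add_card_filter_not (s := Δ S) (p := fun v => dot x v = 0)]
    congr 2
    refine Finset.filter_congr fun v _ => ?_
    rcases zmod2_cases (dot x v) with h | h <;> simp [h]
  have h01 : ((Δ S).filter fun v => dot x v = 0).card
      = ((Δ S).filter fun v => dot x v = 1).card := by
    have := key 0; simpa using this
  have hS1 : 1 ≤ S.card := Finset.card_pos.2 ⟨j, hjS⟩
  have hpow : 2 ^ S.card = 2 * 2 ^ (S.card - 1) := by
    rw [← pow_succ']
    congr 1
    omega
  rcases zmod2_cases t with rfl | rfl
  · omega
  · omega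

/-- restriction of a functional to `Δ S` is zero iff coefficients vanish on `S` -/
lemma card_Δ_filter_dot_zero {m : ℕ} {S : Finset (Fin m)} {x : V m}
    (hx : ∀ i ∈ S, x i = 0) (t : ZMod 2) :
    ((Δ S).filter fun v => dot x v = t).card = if t = 0 then 2 ^ S.card else 0 := by
  rcases zmod2_cases t with rfl | rfl
  · rw [if_pos rfl, ← card_Δ S]
    congr 1
    refine Finset.filter_eq_self.2 fun v hv => dot_eq_zero_of hx hv
  · rw [if_neg (by decide)]
    refine Finset.card_eq_zero.2 (Finset.filter_eq_empty_iff.2 fun v hv => ?_)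
    rw [dot_eq_zero_of hx hv]
    decide

/-- counting pairs in `Δ L × Δ M` with a prescribed value of the pair functional. -/
lemma card_pair {m : ℕ} (L M : Finset (Fin m)) (x y : V m) (t : ZMod 2) :
    (((Δ L) ×ˢ (Δ M)).filter fun p => dot x p.1 + dot y p.2 = t).card =
    if (∀ i ∈ L, x i = 0) ∧ (∀ i ∈ M, y i = 0) then (if t = 0 then 2 ^ (L.card + M.card) else 0)
    else 2 ^ (L.card + M.card - 1) := by
  have hsum : (((Δ L) ×ˢ (Δ M)).filter fun p => dot x p.1 + dot y p.2 = t).card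
      = ∑ d₁ ∈ Δ L, ((Δ M).filter fun d₂ => dot y d₂ = t + dot x d₁).card := by
    rw [Finset.card_filter, Finset.sum_product]
    refine Finset.sum_congr rfl fun d₁ _ => ?_
    rw [Finset.card_filter]
    refine Finset.sum_congr rfl fun d₂ _ => ?_
    congr 1
    rw [eq_iff_iff]
    show dot x d₁ + dot y d₂ = t ↔ _
    rcases zmod2_cases t with rfl|rfl <;> rcases zmod2_cases (dot x d₁) with h|h <;>
      rcases zmod2_cases (dot y d₂) with h'|h' <;> rw [h, h'] <;> decide
  by_cases hy : ∀ i ∈ M, y i = 0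
  · by_cases hx : ∀ i ∈ L, x i = 0
    · rw [if_pos ⟨hx, hy⟩, hsum]
      have : ∀ d₁ ∈ Δ L, ((Δ M).filter fun d₂ => dot y d₂ = t + dot x d₁).card
          = if t = 0 then 2 ^ M.card else 0 := by
        intro d₁ hd₁
        rw [dot_eq_zero_of hx hd₁, add_zero, card_Δ_filter_dot_zero hy]
      rw [Finset.sum_congr rfl this, Finset.sum_const, card_Δ, smul_eq_mul]
      rcases zmod2_cases t with rfl | rfl
      · rw [if_pos rfl, if_pos rfl, pow_add]
      · rw [if_neg (by decide), if_neg (by decide), mul_zero]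
    · rw [if_neg (by tauto), hsum]
      push_neg at hx
      have : ∀ d₁ ∈ Δ L, ((Δ M).filter fun d₂ => dot y d₂ = t + dot x d₁).card
          = if t + dot x d₁ = 0 then 2 ^ M.card else 0 := fun d₁ _ =>
        card_Δ_filter_dot_zero hy _
      rw [Finset.sum_congr rfl this]
      have : ∑ d₁ ∈ Δ L, (if t + dot x d₁ = 0 then 2 ^ M.card else 0)
          = ((Δ L).filter fun d₁ => dot x d₁ = t).card * 2 ^ M.card := by
        rw [Finset.card_filter, Finset.sum_mul]
        refine Finset.sum_congr rfl fun d₁ _ => ?_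
        have : (t + dot x d₁ = 0) ↔ (dot x d₁ = t) := by
          rcases zmod2_cases t with rfl|rfl <;> rcases zmod2_cases (dot x d₁) with h|h <;>
            rw [h] <;> decide
        rw [if_congr this rfl rfl, ite_mul, zero_mul, one_mul]
      rw [this, card_Δ_filter_dot hx, ← pow_add]
      congr 1
      have h1 : 1 ≤ L.card := by
        obtain ⟨i, hi, _⟩ := hx
        exact Finset.card_pos.2 ⟨i, hi⟩
      omega
  · rw [if_neg (by tauto), hsum]
    push_neg at hy
    have : ∀ d₁ ∈ Δ L, ((Δ M).filter fun d₂ => dot y d₂ = t + dot x d₁).card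
        = 2 ^ (M.card - 1) := fun d₁ _ => card_Δ_filter_dot hy _
    rw [Finset.sum_congr rfl this, Finset.sum_const, card_Δ, smul_eq_mul, ← pow_add]
    congr 1
    have h1 : 1 ≤ M.card := by
      obtain ⟨i, hi, _⟩ := hy
      exact Finset.card_pos.2 ⟨i, hi⟩
    omega

/-- counting over the complement of `Δ N`. -/
lemma card_compl_filter {m : ℕ} (N : Finset (Fin m)) (x : V m) (t : ZMod 2) :
    (((Δ N)ᶜ).filter fun v => dot x v = t).card
    = ((Finset.univ : Finset (V m)).filter fun v => dot x v = t).card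
      - ((Δ N).filter fun v => dot x v = t).card := by
  have h : ((Finset.univ : Finset (V m)).filter fun v => dot x v = t)
      = ((Δ N).filter fun v => dot x v = t) ∪ (((Δ N)ᶜ).filter fun v => dot x v = t) := by
    rw [← Finset.filter_union, Finset.union_compl]
  rw [h, Finset.card_union_of_disjoint]
  · omega
  · exact Finset.disjoint_filter_filter disjoint_compl_right

lemma univ_filter_dot {m : ℕ} {x : V m} (hx : x ≠ 0) (t : ZMod 2) :
    ((Finset.univ : Finset (V m)).filter fun v => dot x v = t).card = 2 ^ (m - 1) := by
  have hx' : ∃ i ∈ (Finset.univ : Finset (Fin m)), x i ≠ 0 := by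
    by_contra h
    push_neg at h
    exact hx (funext fun i => h i (Finset.mem_univ i))
  have := card_Δ_filter_dot hx' t
  rw [Δ_univ] at this
  rw [this]
  simp


lemma sum_zmod2_split {ι : Type*} (s : Finset ι) (ε : ι → ZMod 2) (g : ZMod 2 → ℕ) :
    ∑ p ∈ s, g (ε p) = (s.filter fun p => ε p = 0).card * g 0
      + (s.filter fun p => ε p = 1).card * g 1 := by
  have hpart : s.filter (fun p => ¬ ε p = 0) = s.filter fun p => ε p = 1 :=
    Finset.filter_congr fun p _ => by
      rcases zmod2_cases (ε p) with h|h <;> rw [h] <;> decide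
  have e0 : ∑ p ∈ s.filter (fun p => ε p = 0), g (ε p)
      = (s.filter fun p => ε p = 0).card * g 0 := by
    rw [Finset.sum_congr rfl (fun p hp => by rw [(Finset.mem_filter.1 hp).2]),
      Finset.sum_const, smul_eq_mul]
  have e1 : ∑ p ∈ s.filter (fun p => ε p = 1), g (ε p)
      = (s.filter fun p => ε p = 1).card * g 1 := by
    rw [Finset.sum_congr rfl (fun p hp => by rw [(Finset.mem_filter.1 hp).2]),
      Finset.sum_const, smul_eq_mul]
  rw [← Finset.sum_filter_add_sum_filter_not s (fun p => ε p = 0), hpart, e0, e1]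

lemma wt_sum {m : ℕ} (L M N : Finset (Fin m)) (α β γ : V m) :
    wtv (codeMap (Δ L) (Δ M) (Δ N)ᶜ (α, β, γ))
      = ∑ p ∈ (Δ L) ×ˢ (Δ M),
          (((Δ N)ᶜ).filter fun v => dot β v = 1 + (dot α p.1 + dot (β + γ) p.2)).card := by
  have h1 : wtv (codeMap (Δ L) (Δ M) (Δ N)ᶜ (α, β, γ))
      = (((Δ L) ×ˢ ((Δ M) ×ˢ (Δ N)ᶜ)).filter fun p =>
          dot α p.1 + dot (β + γ) p.2.1 + dot β p.2.2 ≠ 0).card := by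
    unfold wtv
    refine Finset.card_bij (fun a _ => (a.1.1, a.2.1.1, a.2.2.1)) ?_ ?_ ?_
    · intro a ha
      rw [Finset.mem_filter] at ha
      rw [Finset.mem_filter, Finset.mem_product, Finset.mem_product]
      refine ⟨⟨a.1.2, a.2.1.2, a.2.2.2⟩, ?_⟩
      rw [← codeMap_apply]
      exact ha.2
    · intro a _ b _ h
      have h1 := congrArg Prod.fst h
      have h2 := congrArg (fun x => x.2.1) h
      have h3 := congrArg (fun x => x.2.2) h
      simp only at h1 h2 h3
      refine Prod.ext (Subtype.ext h1) (Prod.ext (Subtype.ext h2) (Subtype.ext h3))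
    · intro p hp
      rw [Finset.mem_filter, Finset.mem_product, Finset.mem_product] at hp
      obtain ⟨⟨q1, q2, q3⟩, hq⟩ := hp
      refine ⟨(⟨p.1, q1⟩, ⟨p.2.1, q2⟩, ⟨p.2.2, q3⟩), ?_, rfl⟩
      rw [Finset.mem_filter]
      exact ⟨Finset.mem_univ _, by rw [codeMap_apply]; exact hq⟩
  have h2 : (∑ p ∈ (Δ L) ×ˢ (Δ M),
        (((Δ N)ᶜ).filter fun v => dot β v = 1 + (dot α p.1 + dot (β + γ) p.2)).card)
      = ∑ d₁ ∈ Δ L, ∑ d₂ ∈ Δ M,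
        (((Δ N)ᶜ).filter fun v => dot β v = 1 + (dot α d₁ + dot (β + γ) d₂)).card := by
    rw [Finset.sum_product]
  rw [h1, h2, Finset.card_filter, Finset.sum_product]
  refine Finset.sum_congr rfl fun d₁ _ => ?_
  rw [Finset.sum_product]
  refine Finset.sum_congr rfl fun d₂ _ => ?_
  rw [Finset.card_filter]
  refine Finset.sum_congr rfl fun d₃ _ => ?_
  congr 1
  rw [eq_iff_iff]
  show dot α d₁ + dot (β + γ) d₂ + dot β d₃ ≠ 0 ↔ _
  rcases zmod2_cases (dot α d₁) with h1|h1 <;> rcases zmod2_cases (dot (β+γ) d₂) with h2|h2 <;>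
    rcases zmod2_cases (dot β d₃) with h3|h3 <;> rw [h1, h2, h3] <;> decide

lemma dot_zero_right {m : ℕ} (x : V m) : dot x 0 = 0 := by simp [dot]

lemma zero_mem_Δ {m : ℕ} (S : Finset (Fin m)) : (0 : V m) ∈ Δ S :=
  mem_Δ.2 fun i _ => rfl

lemma exists_not_mem_ΔN {m : ℕ} {N : Finset (Fin m)} (hP : N ⊂ Finset.univ) {x : V m}
    (hx : x ≠ 0) (hxc : ∀ v ∉ Δ N, dot x v = 0) : False := by
  obtain ⟨i₀, -, hi₀⟩ := Finset.exists_of_ssubset hP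
  have hxj : ∃ j, x j ≠ 0 := by
    by_contra h
    push_neg at h
    exact hx (funext h)
  obtain ⟨j, hj⟩ := hxj
  have hj1 : x j = 1 := (zmod2_cases (x j)).resolve_left hj
  have hsv : ∀ i, i ∉ N → sv i ∉ Δ N := by
    intro i hi hmem
    have := mem_Δ.1 hmem i hi
    simp [sv] at this
  by_cases hjN : j ∈ N
  · have hne : j ≠ i₀ := fun h => hi₀ (h ▸ hjN)
    have h1 : dot x (sv i₀) = 0 := hxc _ (hsv i₀ hi₀)
    rw [dot_sv] at h1
    have h2 : sv j + sv i₀ ∉ Δ N := by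
      intro hmem
      have := mem_Δ.1 hmem i₀ hi₀
      simp [sv, hne.symm, Ne.symm hne] at this
    have h3 := hxc _ h2
    rw [dot_add_right, dot_sv, dot_sv, hj1, h1] at h3
    exact absurd h3 (by decide)
  · have h1 := hxc _ (hsv j hjN)
    rw [dot_sv, hj1] at h1
    exact absurd h1 (by decide)

lemma codeMap_eq_zero_iff {m : ℕ} {L M N : Finset (Fin m)} (hP : N ⊂ Finset.univ)
    (α β γ : V m) :
    codeMap (Δ L) (Δ M) (Δ N)ᶜ (α, β, γ) = 0
      ↔ (∀ i ∈ L, α i = 0) ∧ β = 0 ∧ (∀ i ∈ M, γ i = 0) := by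
  constructor
  · intro h
    have key : ∀ d₁ ∈ Δ L, ∀ d₂ ∈ Δ M, ∀ d₃ ∈ (Δ N)ᶜ,
        dot α d₁ + dot (β + γ) d₂ + dot β d₃ = 0 := by
      intro d₁ h₁ d₂ h₂ d₃ h₃
      have := congrFun h (⟨d₁, h₁⟩, ⟨d₂, h₂⟩, ⟨d₃, h₃⟩)
      rw [codeMap_apply] at this
      exact this
    obtain ⟨i₀, -, hi₀⟩ := Finset.exists_of_ssubset hP
    have hsv0 : sv i₀ ∈ (Δ N)ᶜ := by
      rw [Finset.mem_compl]
      intro hmem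
      have := mem_Δ.1 hmem i₀ hi₀
      simp [sv] at this
    have base := key 0 (zero_mem_Δ L) 0 (zero_mem_Δ M) (sv i₀) hsv0
    rw [dot_zero_right, dot_zero_right] at base
    have hβd : ∀ d₃ ∈ (Δ N)ᶜ, dot β d₃ = 0 := by
      intro d₃ h₃
      have h4 := key 0 (zero_mem_Δ L) 0 (zero_mem_Δ M) d₃ h₃
      rw [dot_zero_right, dot_zero_right] at h4
      simpa using h4
    have hβ : β = 0 := by
      by_contra hβ
      exact exists_not_mem_ΔN hP hβ (fun v hv => hβd v (Finset.mem_compl.2 hv))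
    have hα : ∀ i ∈ L, α i = 0 := by
      intro i hi
      have h5 := key (sv i) (sv_mem_Δ hi) 0 (zero_mem_Δ M) (sv i₀) hsv0
      rw [dot_zero_right, dot_sv, hβ] at h5
      simpa [dot_zero_left] using h5
    have hγ : ∀ i ∈ M, γ i = 0 := by
      intro i hi
      have h5 := key 0 (zero_mem_Δ L) (sv i) (sv_mem_Δ hi) (sv i₀) hsv0
      rw [dot_zero_right, dot_sv, hβ] at h5
      simpa [dot_zero_left] using h5
    exact ⟨hα, hβ, hγ⟩
  · rintro ⟨hα, hβ, hγ⟩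
    funext d
    rw [codeMap_apply, hβ]
    have h1 : dot α d.1.1 = 0 := dot_eq_zero_of hα d.1.2
    have h2 : dot (0 + γ) d.2.1.1 = 0 := by
      rw [zero_add]
      exact dot_eq_zero_of hγ d.2.1.2
    rw [h1, h2, dot_zero_left]
    rfl

lemma wt_two {m : ℕ} (hm : 1 ≤ m) {L M N : Finset (Fin m)} {α β γ : V m}
    (hα : ∀ i ∈ L, α i = 0) (hβγ : ∀ i ∈ M, (β + γ) i = 0) (hβN : ∀ i ∈ N, β i = 0)
    (hβ : β ≠ 0) :
    wtv (codeMap (Δ L) (Δ M) (Δ N)ᶜ (α, β, γ)) = 2 ^ (m + L.card + M.card - 1) := by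
  rw [wt_sum]
  have hconst : ∀ p ∈ (Δ L) ×ˢ (Δ M),
      (((Δ N)ᶜ).filter fun v => dot β v = 1 + (dot α p.1 + dot (β + γ) p.2)).card
        = 2 ^ (m - 1) := by
    intro p hp
    rw [Finset.mem_product] at hp
    rw [dot_eq_zero_of hα hp.1, dot_eq_zero_of hβγ hp.2, add_zero, add_zero,
      card_compl_filter, univ_filter_dot hβ, card_Δ_filter_dot_zero hβN,
      if_neg (by decide), Nat.sub_zero]
  rw [Finset.sum_congr rfl hconst, Finset.sum_const, Finset.card_product, card_Δ, card_Δ,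
    smul_eq_mul, ← pow_add, ← pow_add]
  congr 1
  omega

lemma wt_one {m : ℕ} (hm : 1 ≤ m) {L M N : Finset (Fin m)} (hP : N ⊂ Finset.univ)
    {α β γ : V m}
    (h0 : ¬((∀ i ∈ L, α i = 0) ∧ β = 0 ∧ (∀ i ∈ M, γ i = 0)))
    (h2 : ¬((∀ i ∈ L, α i = 0) ∧ (∀ i ∈ M, (β + γ) i = 0) ∧ (∀ i ∈ N, β i = 0))) :
    2 * wtv (codeMap (Δ L) (Δ M) (Δ N)ᶜ (α, β, γ))
      = (2 ^ m - 2 ^ N.card) * 2 ^ (L.card + M.card) := by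
  have hNm : N.card < m := by
    have := Finset.card_lt_card hP
    simpa using this
  have em : (2:ℤ) ^ m = 2 * 2 ^ (m - 1) := by
    rw [← pow_succ']
    congr 1
    omega
  rw [wt_sum]
  have hsplit : (∑ p ∈ (Δ L) ×ˢ (Δ M),
        (((Δ N)ᶜ).filter fun v => dot β v = 1 + (dot α p.1 + dot (β + γ) p.2)).card)
      = (((Δ L) ×ˢ (Δ M)).filter fun p => dot α p.1 + dot (β + γ) p.2 = 0).card
          * (((Δ N)ᶜ).filter fun v => dot β v = 1 + 0).card
        + (((Δ L) ×ˢ (Δ M)).filter fun p => dot α p.1 + dot (β + γ) p.2 = 1).card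
          * (((Δ N)ᶜ).filter fun v => dot β v = 1 + 1).card :=
    sum_zmod2_split _ _ (fun t => (((Δ N)ᶜ).filter fun v => dot β v = 1 + t).card)
  rw [hsplit, show (1 + 0 : ZMod 2) = 1 from by decide,
    show (1 + 1 : ZMod 2) = 0 from by decide]
  by_cases hβN : ∀ i ∈ N, β i = 0
  · by_cases hβ : β = 0
    · -- case C : β = 0
      subst hβ
      have hcond : ¬((∀ i ∈ L, α i = 0) ∧ (∀ i ∈ M, ((0:V m) + γ) i = 0)) := by
        rintro ⟨ha, hb⟩
        exact h0 ⟨ha, rfl, fun i hi => by simpa using hb i hi⟩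
      have hI1 : (((Δ N)ᶜ).filter fun v => dot (0:V m) v = 1).card = 0 := by
        rw [Finset.card_eq_zero]
        refine Finset.filter_eq_empty_iff.2 fun v _ => ?_
        rw [dot_zero_left]
        decide
      have hI0 : (((Δ N)ᶜ).filter fun v => dot (0:V m) v = 0).card = 2 ^ m - 2 ^ N.card := by
        have he : ((Δ N)ᶜ).filter (fun v => dot (0:V m) v = 0) = (Δ N)ᶜ :=
          Finset.filter_eq_self.2 fun v _ => dot_zero_left v
        rw [he, Finset.card_compl, card_Δ]
        congr 1
        rw [Fintype.card_fun]
        simp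
      rw [hI1, hI0, card_pair L M α (0 + γ) 0, card_pair L M α (0 + γ) 1,
        if_neg hcond, if_neg hcond]
      have hs : 1 ≤ L.card + M.card := by
        rw [not_and_or] at hcond
        rcases hcond with h | h <;> push_neg at h <;> obtain ⟨i, hi, -⟩ := h
        · have := Finset.card_pos.2 ⟨i, hi⟩; omega
        · have := Finset.card_pos.2 ⟨i, hi⟩; omega
      have es : (2:ℤ) ^ (L.card + M.card) = 2 * 2 ^ (L.card + M.card - 1) := by
        rw [← pow_succ']
        congr 1
        omega
      have hle : 2 ^ N.card ≤ 2 ^ m := Nat.pow_le_pow_right (by norm_num) (by omega)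
      zify [hle]
      rw [es]
      ring
    · -- case B : β ≠ 0 but β vanishes on N
      have hcond : ¬((∀ i ∈ L, α i = 0) ∧ (∀ i ∈ M, (β + γ) i = 0)) := by
        rintro ⟨ha, hb⟩
        exact h2 ⟨ha, hb, hβN⟩
      have hI1 : (((Δ N)ᶜ).filter fun v => dot β v = 1).card = 2 ^ (m - 1) := by
        rw [card_compl_filter, univ_filter_dot hβ, card_Δ_filter_dot_zero hβN,
          if_neg (by decide), Nat.sub_zero]
      have hI0 : (((Δ N)ᶜ).filter fun v => dot β v = 0).card
          = 2 ^ (m - 1) - 2 ^ N.card := by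
        rw [card_compl_filter, univ_filter_dot hβ, card_Δ_filter_dot_zero hβN, if_pos rfl]
      rw [hI1, hI0, card_pair L M α (β + γ) 0, card_pair L M α (β + γ) 1,
        if_neg hcond, if_neg hcond]
      have hs : 1 ≤ L.card + M.card := by
        rw [not_and_or] at hcond
        rcases hcond with h | h <;> push_neg at h <;> obtain ⟨i, hi, -⟩ := h
        · have := Finset.card_pos.2 ⟨i, hi⟩; omega
        · have := Finset.card_pos.2 ⟨i, hi⟩; omega
      have es : (2:ℤ) ^ (L.card + M.card) = 2 * 2 ^ (L.card + M.card - 1) := by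
        rw [← pow_succ']
        congr 1
        omega
      have hle1 : 2 ^ N.card ≤ 2 ^ (m - 1) := Nat.pow_le_pow_right (by norm_num) (by omega)
      have hle2 : 2 ^ N.card ≤ 2 ^ m := Nat.pow_le_pow_right (by norm_num) (by omega)
      zify [hle1, hle2]
      rw [es, em]
      ring
  · -- case A : β does not vanish on N
    push_neg at hβN
    obtain ⟨j, hjN, hj⟩ := hβN
    have hβ : β ≠ 0 := fun h => hj (by rw [h]; rfl)
    have hN1 : 1 ≤ N.card := Finset.card_pos.2 ⟨j, hjN⟩
    have hex : ∃ i ∈ N, β i ≠ 0 := ⟨j, hjN, hj⟩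
    have hI : ∀ t : ZMod 2, (((Δ N)ᶜ).filter fun v => dot β v = t).card
        = 2 ^ (m - 1) - 2 ^ (N.card - 1) := by
      intro t
      rw [card_compl_filter, univ_filter_dot hβ, card_Δ_filter_dot t (hx := hex)]
    rw [hI 1, hI 0, card_pair L M α (β + γ) 0, card_pair L M α (β + γ) 1]
    have eN : (2:ℤ) ^ N.card = 2 * 2 ^ (N.card - 1) := by
      rw [← pow_succ']
      congr 1
      omega
    have hle1 : 2 ^ (N.card - 1) ≤ 2 ^ (m - 1) :=
      Nat.pow_le_pow_right (by norm_num) (by omega)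
    have hle2 : 2 ^ N.card ≤ 2 ^ m := Nat.pow_le_pow_right (by norm_num) (by omega)
    by_cases hcond : (∀ i ∈ L, α i = 0) ∧ (∀ i ∈ M, (β + γ) i = 0)
    · rw [if_pos hcond, if_pos hcond, if_pos rfl, if_neg (by decide)]
      zify [hle1, hle2]
      rw [em, eN]
      ring
    · rw [if_neg hcond, if_neg hcond]
      have hs : 1 ≤ L.card + M.card := by
        rw [not_and_or] at hcond
        rcases hcond with h | h <;> push_neg at h <;> obtain ⟨i, hi, -⟩ := h
        · have := Finset.card_pos.2 ⟨i, hi⟩; omega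
        · have := Finset.card_pos.2 ⟨i, hi⟩; omega
      have es : (2:ℤ) ^ (L.card + M.card) = 2 * 2 ^ (L.card + M.card - 1) := by
        rw [← pow_succ']
        congr 1
        omega
      zify [hle1, hle2]
      rw [em, eN, es]
      ring

lemma geom_two_sum (a : ℕ) : ∑ i ∈ Finset.range a, (2:ℤ) ^ i = 2 ^ a - 1 := by
  have h := geom_sum_mul (2:ℤ) a
  norm_num at h
  exact h

lemma geom_two_sum' (a : ℕ) : ∑ i ∈ Finset.range a, (2:ℤ) ^ (a - 1 - i) = 2 ^ a - 1 := by
  rw [Finset.sum_range_reflect (fun i => (2:ℤ) ^ i) a]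
  exact geom_two_sum a

lemma griesmer_sum (a t : ℕ) (ha : 1 ≤ a) (ht : 1 ≤ t) :
    ∑ i ∈ Finset.range (a + t), ⌈((2 ^ (a-1) * (2 ^ t - 1) : ℕ) : ℚ) / 2 ^ i⌉
      = ((2 ^ a * (2 ^ t - 1) : ℕ) : ℤ) := by
  have h2t : (1:ℕ) ≤ 2 ^ t := Nat.one_le_two_pow
  have hD : ((2 ^ (a-1) * (2 ^ t - 1) : ℕ) : ℚ) = 2 ^ (a-1) * (2 ^ t - 1) := by
    push_cast [h2t]
    ring
  rw [Finset.sum_range_add]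
  have h1 : ∀ i ∈ Finset.range a, ⌈((2 ^ (a-1) * (2 ^ t - 1) : ℕ) : ℚ) / 2 ^ i⌉
      = (2:ℤ) ^ (a-1-i) * (2 ^ t - 1) := by
    intro i hi
    rw [Finset.mem_range] at hi
    have hq : ((2 ^ (a-1) * (2 ^ t - 1) : ℕ) : ℚ) / 2 ^ i
        = ((2 ^ (a-1-i) * (2 ^ t - 1) : ℤ) : ℚ) := by
      rw [div_eq_iff (by positivity : (2:ℚ) ^ i ≠ 0), hD]
      push_cast
      rw [mul_right_comm, ← pow_add, show a - 1 - i + i = a - 1 by omega]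
    rw [hq, Int.ceil_intCast]
  have h2 : ∀ j ∈ Finset.range t, ⌈((2 ^ (a-1) * (2 ^ t - 1) : ℕ) : ℚ) / 2 ^ (a + j)⌉
      = (2:ℤ) ^ (t-1-j) := by
    intro j hj
    rw [Finset.mem_range] at hj
    rw [Int.ceil_eq_iff]
    have hpos : (0:ℚ) < 2 ^ (a + j) := by positivity
    have c1 : (2:ℚ) ^ (t-1-j) * 2 ^ (a+j) = 2 ^ (a+t-1) := by
      rw [← pow_add]; congr 1; omega
    have c2 : (2:ℚ) ^ (a-1) * 2 ^ t = 2 ^ (a+t-1) := by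
      rw [← pow_add]; congr 1; omega
    have c3 : (2:ℚ) ^ (a-1) < 2 ^ (a+j) := by
      have : (2:ℕ) ^ (a-1) < 2 ^ (a+j) := Nat.pow_lt_pow_right (by norm_num) (by omega)
      exact_mod_cast this
    constructor
    · rw [hD]
      push_cast
      rw [lt_div_iff₀ hpos]
      nlinarith [hpos, c1, c2, c3, pow_pos (by norm_num : (0:ℚ) < 2) (a-1)]
    · rw [hD, div_le_iff₀ hpos]
      push_cast
      nlinarith [hpos, c1, c2, c3, pow_pos (by norm_num : (0:ℚ) < 2) (a-1)]
  rw [Finset.sum_congr rfl h1, Finset.sum_congr rfl h2, ← Finset.sum_mul, geom_two_sum',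
    geom_two_sum']
  push_cast [h2t]
  ring

lemma wtv_eq_zero_iff {ι : Type} [Fintype ι] (c : ι → ZMod 2) : wtv c = 0 ↔ c = 0 := by
  unfold wtv
  rw [Finset.card_eq_zero, Finset.filter_eq_empty_iff]
  constructor
  · intro h
    funext i
    have := h (Finset.mem_univ i)
    push_neg at this
    exact this
  · intro h i _
    rw [h]
    simp

lemma ker_codeMap_card {m : ℕ} {L M N : Finset (Fin m)} (hP : N ⊂ Finset.univ) :
    Fintype.card ↥(LinearMap.ker (codeMap (Δ L) (Δ M) (Δ N)ᶜ))
      = 2 ^ ((m - L.card) + (m - M.card)) := by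
  classical
  rw [Fintype.card_subtype]
  have hset : (Finset.univ.filter
        (fun v : V m × V m × V m => v ∈ LinearMap.ker (codeMap (Δ L) (Δ M) (Δ N)ᶜ)))
      = (Δ Lᶜ) ×ˢ (({0} : Finset (V m)) ×ˢ (Δ Mᶜ)) := by
    ext v
    have hv : codeMap (Δ L) (Δ M) (Δ N)ᶜ v = codeMap (Δ L) (Δ M) (Δ N)ᶜ (v.1, v.2.1, v.2.2) :=
      rfl
    simp only [Finset.mem_filter, Finset.mem_univ, true_and, LinearMap.mem_ker, hv,
      codeMap_eq_zero_iff hP, Finset.mem_product, Finset.mem_singleton, mem_Δ,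
      Finset.mem_compl, not_not]
  rw [hset, Finset.card_product, Finset.card_product, Finset.card_singleton, card_Δ, card_Δ,
    Finset.card_compl, Finset.card_compl, Fintype.card_fin, one_mul, ← pow_add]

lemma finrank_code {m : ℕ} {L M N : Finset (Fin m)} (hP : N ⊂ Finset.univ) :
    Module.finrank (ZMod 2) ↥(LinearMap.range (codeMap (Δ L) (Δ M) (Δ N)ᶜ))
      = m + L.card + M.card := by
  have h1 : Fintype.card ↥(LinearMap.ker (codeMap (Δ L) (Δ M) (Δ N)ᶜ))
      = 2 ^ Module.finrank (ZMod 2) ↥(LinearMap.ker (codeMap (Δ L) (Δ M) (Δ N)ᶜ)) := by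
    have := Module.card_eq_pow_finrank (K := ZMod 2)
      (V := ↥(LinearMap.ker (codeMap (Δ L) (Δ M) (Δ N)ᶜ)))
    rwa [ZMod.card] at this
  have hfk : Module.finrank (ZMod 2) ↥(LinearMap.ker (codeMap (Δ L) (Δ M) (Δ N)ᶜ))
      = (m - L.card) + (m - M.card) := by
    apply Nat.pow_right_injective (le_refl 2)
    show (2:ℕ) ^ _ = (2:ℕ) ^ _
    rw [← h1, ker_codeMap_card hP]
  have hrn := LinearMap.finrank_range_add_finrank_ker (codeMap (Δ L) (Δ M) (Δ N)ᶜ)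
  have hdom : Module.finrank (ZMod 2) (V m × V m × V m) = m + (m + m) := by
    rw [Module.finrank_prod, Module.finrank_prod, Module.finrank_pi]
    simp
  have hL : L.card ≤ m := by
    have := Finset.card_le_univ L
    simpa using this
  have hM : M.card ≤ m := by
    have := Finset.card_le_univ M
    simpa using this
  rw [hdom, hfk] at hrn
  omega

lemma zmod2_sub_of_add {a b : ZMod 2} (h : a + b = 0) : b - a = 0 := by
  revert a b; decide

lemma w2_val {m : ℕ} (hm : 1 ≤ m) {L M N : Finset (Fin m)} {β₀ : V m}
    (hmem : β₀ ∈ (Δ Nᶜ).erase 0) :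
    wtv (codeMap (Δ L) (Δ M) (Δ N)ᶜ (0, β₀, β₀)) = 2 ^ (m + L.card + M.card - 1) := by
  rcases Finset.mem_erase.1 hmem with ⟨hβ0, hβΔ⟩
  refine wt_two hm (fun i _ => rfl) (fun i _ => ?_) (fun i hi => ?_) hβ0
  · show β₀ i + β₀ i = 0
    rcases zmod2_cases (β₀ i) with h | h <;> rw [h] <;> decide
  · exact mem_Δ.1 hβΔ i (by simp [Finset.mem_compl, hi])

lemma inj_w2 {m : ℕ} {L M N : Finset (Fin m)} (hP : N ⊂ Finset.univ) {β₀ β₁ : V m}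
    (h0 : β₀ ∈ (Δ Nᶜ).erase 0) (h1 : β₁ ∈ (Δ Nᶜ).erase 0)
    (h : codeMap (Δ L) (Δ M) (Δ N)ᶜ (0, β₀, β₀) = codeMap (Δ L) (Δ M) (Δ N)ᶜ (0, β₁, β₁)) :
    β₀ = β₁ := by
  have hdiff : codeMap (Δ L) (Δ M) (Δ N)ᶜ ((0, β₀, β₀) - (0, β₁, β₁)) = 0 := by
    rw [map_sub, h, sub_self]
  have hpair : ((0, β₀, β₀) - (0, β₁, β₁) : V m × V m × V m) = (0, β₀ - β₁, β₀ - β₁) := by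
    refine Prod.ext (by simp) (Prod.ext (by simp) (by simp))
  rw [hpair] at hdiff
  have hdiff' := hdiff
  rw [codeMap_eq_zero_iff hP] at hdiff'
  have := hdiff'.2.1
  rwa [sub_eq_zero] at this

lemma range_cases {m : ℕ} (hm : 1 ≤ m) {L M N : Finset (Fin m)} (hP : N ⊂ Finset.univ)
    {c : ({x // x ∈ Δ L} × {x // x ∈ Δ M} × {x // x ∈ (Δ N)ᶜ}) → ZMod 2}
    (hc : c ∈ LinearMap.range (codeMap (Δ L) (Δ M) (Δ N)ᶜ)) :
    c = 0 ∨ (2 * wtv c = (2 ^ m - 2 ^ N.card) * 2 ^ (L.card + M.card))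
      ∨ ∃ β₀ ∈ (Δ Nᶜ).erase 0, c = codeMap (Δ L) (Δ M) (Δ N)ᶜ (0, β₀, β₀) := by
  obtain ⟨⟨α, β, γ⟩, rfl⟩ := hc
  by_cases h0 : (∀ i ∈ L, α i = 0) ∧ β = 0 ∧ (∀ i ∈ M, γ i = 0)
  · exact Or.inl ((codeMap_eq_zero_iff hP α β γ).2 h0)
  by_cases h2 : (∀ i ∈ L, α i = 0) ∧ (∀ i ∈ M, (β + γ) i = 0) ∧ (∀ i ∈ N, β i = 0)
  · refine Or.inr (Or.inr ⟨β, ?_, ?_⟩)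
    · rw [Finset.mem_erase]
      constructor
      · intro hβ
        refine h0 ⟨h2.1, hβ, fun i hi => ?_⟩
        have := h2.2.1 i hi
        rw [hβ] at this
        simpa using this
      · exact mem_Δ.2 fun i hi => h2.2.2 i (by simpa [Finset.mem_compl] using hi)
    · have hsplit : (α, β, γ) = (0, β, β) + (α, 0, γ - β) := by
        refine Prod.ext (by simp) (Prod.ext (by simp) ?_)
        show γ = β + (γ - β)
        rw [add_sub_cancel]
      rw [hsplit, map_add]
      have hz : codeMap (Δ L) (Δ M) (Δ N)ᶜ (α, 0, γ - β) = 0 := by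
        refine (codeMap_eq_zero_iff hP α 0 (γ - β)).2 ⟨h2.1, rfl, fun i hi => ?_⟩
        exact zmod2_sub_of_add (h2.2.1 i hi)
      rw [hz, add_zero]
  · exact Or.inr (Or.inl (wt_one hm hP h0 h2))

/-- Theorem 4.1(4): the code `C((Δ L), (Δ M), (Δ N)ᶜ)` is a two-weight
binary `[(2^m − 2^{|N|})·2^{|L|}+|M|}, m+|L|+|M|]` Griesmer code with the stated
weight distribution. -/
theorem stmt8 (m : ℕ) (hm : 1 ≤ m) (L M N : Finset (Fin m))
    (hP : N ⊂ Finset.univ) (hne : L ≠ ∅ ∨ M ≠ ∅ ∨ N ≠ ∅) :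
    (Fintype.card ({x // x ∈ (Δ L)} × {x // x ∈ (Δ M)} × {x // x ∈ (Δ N)ᶜ}) = (2 ^ m - 2 ^ N.card) * 2 ^ (L.card + M.card)) ∧
    (Module.finrank (ZMod 2) ↥(LinearMap.range (codeMap (Δ L) (Δ M) (Δ N)ᶜ)) = m + L.card + M.card) ∧
    IsLeast {w : ℕ | ∃ c ∈ LinearMap.range (codeMap (Δ L) (Δ M) (Δ N)ᶜ), c ≠ 0 ∧ wtv c = w}
      (((2 ^ m - 2 ^ N.card) * 2 ^ (L.card + M.card)) / 2) ∧
    ((∑ c ∈ Finset.univ.filter (fun c => c ∈ LinearMap.range (codeMap (Δ L) (Δ M) (Δ N)ᶜ)),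
        (X : ℤ[X]) ^ wtv c)
      = 1 + Polynomial.C ((2 : ℤ) ^ (m + L.card + M.card) - 2 ^ (m - N.card)) * X ^ (((2 ^ m - 2 ^ N.card) * 2 ^ (L.card + M.card)) / 2)
          + Polynomial.C ((2 : ℤ) ^ (m - N.card) - 1) * X ^ (2 ^ (m + L.card + M.card - 1))) ∧
    (∑ i ∈ Finset.range (m + L.card + M.card), ⌈((((2 ^ m - 2 ^ N.card) * 2 ^ (L.card + M.card)) / 2 : ℚ)) / 2 ^ i⌉ = ((2 ^ m - 2 ^ N.card) * 2 ^ (L.card + M.card) : ℤ)) := by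
  classical
  have hNm : N.card < m := by
    have := Finset.card_lt_card hP
    simpa using this
  have hL : L.card ≤ m := by have := Finset.card_le_univ L; simpa using this
  have hM : M.card ≤ m := by have := Finset.card_le_univ M; simpa using this
  have hpowlt : 2 ^ N.card < 2 ^ m := Nat.pow_lt_pow_right (by norm_num) hNm
  have hNpos : L.card + M.card = 0 → 1 ≤ N.card := by
    intro h0
    rcases hne with h | h | h
    · exact absurd (Finset.card_eq_zero.1 (by omega)) h
    · exact absurd (Finset.card_eq_zero.1 (by omega)) h
    · exact Finset.card_pos.2 (Finset.nonempty_iff_ne_empty.2 h)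
  have heven : 2 * (((2 ^ m - 2 ^ N.card) * 2 ^ (L.card + M.card)) / 2)
      = (2 ^ m - 2 ^ N.card) * 2 ^ (L.card + M.card) := by
    rcases Nat.eq_zero_or_pos (L.card + M.card) with h0 | h0
    · have hN1 := hNpos h0
      have hd1 : 2 ∣ 2 ^ m := dvd_pow_self 2 (by omega)
      have hd2 : 2 ∣ 2 ^ N.card := dvd_pow_self 2 (by omega)
      exact Nat.mul_div_cancel' (Dvd.dvd.mul_right (Nat.dvd_sub hd1 hd2) _)
    · have hd : 2 ∣ 2 ^ (L.card + M.card) := dvd_pow_self 2 (by omega)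
      exact Nat.mul_div_cancel' (Dvd.dvd.mul_left hd _)
  have hw1pos : 1 ≤ ((2 ^ m - 2 ^ N.card) * 2 ^ (L.card + M.card)) / 2 := by
    rcases Nat.eq_zero_or_pos (L.card + M.card) with h0 | h0
    · have hN1 := hNpos h0
      have h1 : 2 ^ N.card ≤ 2 ^ (m - 1) := Nat.pow_le_pow_right (by norm_num) (by omega)
      have h2 : 2 ≤ 2 ^ (m - 1) := by
        have : 2 ^ 1 ≤ 2 ^ (m - 1) := Nat.pow_le_pow_right (by norm_num) (by omega)
        simpa using this
      have h3 : 2 ^ m = 2 * 2 ^ (m - 1) := by rw [← pow_succ']; congr 1; omega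
      rw [h0, pow_zero, mul_one]
      omega
    · have h1 : 2 ≤ 2 ^ (L.card + M.card) := by
        have : 2 ^ 1 ≤ 2 ^ (L.card + M.card) := Nat.pow_le_pow_right (by norm_num) h0
        simpa using this
      have h2 : 2 ^ (L.card + M.card) ≤ (2 ^ m - 2 ^ N.card) * 2 ^ (L.card + M.card) := by
        have := Nat.mul_le_mul_right (2 ^ (L.card + M.card))
          (show 1 ≤ 2 ^ m - 2 ^ N.card by omega)
        simpa using this
      omega
  have hw1w2 : ((2 ^ m - 2 ^ N.card) * 2 ^ (L.card + M.card)) / 2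
      < 2 ^ (m + L.card + M.card - 1) := by
    have e1 : 2 ^ (m + L.card + M.card) = 2 * 2 ^ (m + L.card + M.card - 1) := by
      rw [← pow_succ']; congr 1; omega
    have e2 : (2 ^ m - 2 ^ N.card) * 2 ^ (L.card + M.card) < 2 ^ (m + L.card + M.card) := by
      calc (2 ^ m - 2 ^ N.card) * 2 ^ (L.card + M.card)
          < 2 ^ m * 2 ^ (L.card + M.card) :=
            mul_lt_mul_of_pos_right
              (by have h1 : (1:ℕ) ≤ 2 ^ N.card := Nat.one_le_two_pow; omega)
              (pow_pos (by norm_num) _)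
        _ = 2 ^ (m + L.card + M.card) := by rw [← pow_add, add_assoc]
    omega
  refine ⟨?_, finrank_code hP, ⟨?_, ?_⟩, ?_, ?_⟩
  · -- part 1 : length
    rw [Fintype.card_prod, Fintype.card_prod, Fintype.card_coe, Fintype.card_coe,
      Fintype.card_coe, card_Δ, card_Δ, Finset.card_compl, card_Δ, Fintype.card_fun,
      ZMod.card, Fintype.card_fin, pow_add]
    ring
  · -- part 3a : minimum weight attained
    obtain ⟨α, β, γ, h0, h2⟩ : ∃ α β γ : V m,
        ¬((∀ i ∈ L, α i = 0) ∧ β = 0 ∧ (∀ i ∈ M, γ i = 0))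
        ∧ ¬((∀ i ∈ L, α i = 0) ∧ (∀ i ∈ M, (β + γ) i = 0) ∧ (∀ i ∈ N, β i = 0)) := by
      rcases hne with h | h | h
      · obtain ⟨i, hi⟩ := Finset.nonempty_iff_ne_empty.2 h
        exact ⟨sv i, 0, 0, fun hc => absurd (hc.1 i hi) (by simp [sv]),
          fun hc => absurd (hc.1 i hi) (by simp [sv])⟩
      · obtain ⟨i, hi⟩ := Finset.nonempty_iff_ne_empty.2 h
        refine ⟨0, 0, sv i, fun hc => absurd (hc.2.2 i hi) (by simp [sv]),
          fun hc => absurd (hc.2.1 i hi) ?_⟩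
        simp [sv]
      · obtain ⟨i, hi⟩ := Finset.nonempty_iff_ne_empty.2 h
        refine ⟨0, sv i, 0, fun hc => ?_, fun hc => absurd (hc.2.2 i hi) (by simp [sv])⟩
        have := congrFun hc.2.1 i
        simp [sv] at this
    have hwt := wt_one hm hP h0 h2
    refine ⟨codeMap (Δ L) (Δ M) (Δ N)ᶜ (α, β, γ), ⟨(α, β, γ), rfl⟩, ?_, by omega⟩
    intro hczero
    rw [hczero] at hwt
    have : wtv (0 : ({x // x ∈ Δ L} × {x // x ∈ Δ M} × {x // x ∈ (Δ N)ᶜ}) → ZMod 2) = 0 :=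
      (wtv_eq_zero_iff 0).2 rfl
    omega
  · -- part 3b : lower bound
    rintro w ⟨c, hc, hc0, rfl⟩
    rcases range_cases hm hP hc with h | h | ⟨β₀, hβ₀, rfl⟩
    · exact absurd h hc0
    · rw [← heven] at h
      omega
    · rw [w2_val hm hβ₀]
      omega
  · -- part 4 : weight enumerator
    have hw2pos : 0 < 2 ^ (m + L.card + M.card - 1) := pow_pos (by norm_num) _
    have hRcard : (Finset.univ.filter
        (fun c => c ∈ LinearMap.range (codeMap (Δ L) (Δ M) (Δ N)ᶜ))).card
        = 2 ^ (m + L.card + M.card) := by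
      have h1 := Module.card_eq_pow_finrank (K := ZMod 2)
        (V := ↥(LinearMap.range (codeMap (Δ L) (Δ M) (Δ N)ᶜ)))
      rw [ZMod.card, finrank_code hP] at h1
      rw [← h1, ← Finset.card_univ]
      refine Finset.card_bij (fun c hc =>
        (⟨c, (Finset.mem_filter.1 hc).2⟩ : ↥(LinearMap.range (codeMap (Δ L) (Δ M) (Δ N)ᶜ))))
        ?_ ?_ ?_
      · intro a ha
        exact Finset.mem_univ _
      · intro a ha b hb h
        exact congrArg Subtype.val h
      · intro b _
        exact ⟨b.1, Finset.mem_filter.2 ⟨Finset.mem_univ _, b.2⟩, rfl⟩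
    have hS2card : ((Finset.univ.filter
        (fun c => c ∈ LinearMap.range (codeMap (Δ L) (Δ M) (Δ N)ᶜ))).filter
          (fun c => wtv c = 2 ^ (m + L.card + M.card - 1))).card
        = 2 ^ (m - N.card) - 1 := by
      have hT : ((Δ Nᶜ).erase 0).card = 2 ^ (m - N.card) - 1 := by
        rw [Finset.card_erase_of_mem (zero_mem_Δ _), card_Δ, Finset.card_compl,
          Fintype.card_fin]
      rw [← hT]
      refine (Finset.card_bij (fun β₀ _ => codeMap (Δ L) (Δ M) (Δ N)ᶜ (0, β₀, β₀))
        ?_ ?_ ?_).symm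
      · intro β₀ hβ₀
        refine Finset.mem_filter.2 ⟨Finset.mem_filter.2 ⟨Finset.mem_univ _,
          ⟨(0, β₀, β₀), rfl⟩⟩, w2_val hm hβ₀⟩
      · intro a ha b hb h
        exact inj_w2 hP ha hb h
      · intro c hc
        rcases Finset.mem_filter.1 hc with ⟨hcR, hcw⟩
        rcases Finset.mem_filter.1 hcR with ⟨-, hcr⟩
        rcases range_cases hm hP hcr with h | h | ⟨β₀, hβ₀, h⟩
        · rw [h, (wtv_eq_zero_iff 0).2 rfl] at hcw
          omega
        · rw [← heven] at h
          omega
        · exact ⟨β₀, hβ₀, h.symm⟩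
    have hP0 : (Finset.univ.filter
        (fun c => c ∈ LinearMap.range (codeMap (Δ L) (Δ M) (Δ N)ᶜ))).filter
          (fun c => wtv c = 0) = {0} := by
      ext c
      simp only [Finset.mem_filter, Finset.mem_univ, true_and, Finset.mem_singleton,
        wtv_eq_zero_iff]
      constructor
      · rintro ⟨-, h⟩; exact h
      · rintro rfl; exact ⟨Submodule.zero_mem _, rfl⟩
    have hQ2 : ((Finset.univ.filter
        (fun c => c ∈ LinearMap.range (codeMap (Δ L) (Δ M) (Δ N)ᶜ))).filter
          (fun c => ¬ wtv c = 0)).filter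
          (fun c => ¬ wtv c = ((2 ^ m - 2 ^ N.card) * 2 ^ (L.card + M.card)) / 2)
        = (Finset.univ.filter
        (fun c => c ∈ LinearMap.range (codeMap (Δ L) (Δ M) (Δ N)ᶜ))).filter
          (fun c => wtv c = 2 ^ (m + L.card + M.card - 1)) := by
      ext c
      simp only [Finset.mem_filter, Finset.mem_univ, true_and]
      constructor
      · rintro ⟨⟨hcr, h1⟩, h2⟩
        refine ⟨hcr, ?_⟩
        rcases range_cases hm hP hcr with h | h | ⟨β₀, hβ₀, rfl⟩
        · rw [h, (wtv_eq_zero_iff 0).2 rfl] at h1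
          omega
        · rw [← heven] at h
          omega
        · exact w2_val hm hβ₀
      · rintro ⟨hcr, hw⟩
        exact ⟨⟨hcr, by omega⟩, by omega⟩
    have hcnt1 := Finset.card_filter_add_card_filter_not
      (s := Finset.univ.filter
        (fun c => c ∈ LinearMap.range (codeMap (Δ L) (Δ M) (Δ N)ᶜ)))
      (p := fun c => wtv c = 0)
    have hcnt2 := Finset.card_filter_add_card_filter_not
      (s := (Finset.univ.filter
        (fun c => c ∈ LinearMap.range (codeMap (Δ L) (Δ M) (Δ N)ᶜ))).filter
          (fun c => ¬ wtv c = 0))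
      (p := fun c => wtv c = ((2 ^ m - 2 ^ N.card) * 2 ^ (L.card + M.card)) / 2)
    rw [hP0, Finset.card_singleton, hRcard] at hcnt1
    rw [hQ2, hS2card] at hcnt2
    rw [← Finset.sum_filter_add_sum_filter_not (Finset.univ.filter
        (fun c => c ∈ LinearMap.range (codeMap (Δ L) (Δ M) (Δ N)ᶜ)))
      (fun c => wtv c = 0),
      ← Finset.sum_filter_add_sum_filter_not ((Finset.univ.filter
        (fun c => c ∈ LinearMap.range (codeMap (Δ L) (Δ M) (Δ N)ᶜ))).filter
          (fun c => ¬ wtv c = 0))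
      (fun c => wtv c = ((2 ^ m - 2 ^ N.card) * 2 ^ (L.card + M.card)) / 2),
      hP0, hQ2, Finset.sum_singleton]
    have h00 : wtv (0 : ({x // x ∈ Δ L} × {x // x ∈ Δ M} × {x // x ∈ (Δ N)ᶜ}) → ZMod 2) = 0 :=
      (wtv_eq_zero_iff 0).2 rfl
    rw [h00, pow_zero]
    have hsum1 : ∑ c ∈ ((Finset.univ.filter
        (fun c => c ∈ LinearMap.range (codeMap (Δ L) (Δ M) (Δ N)ᶜ))).filter
          (fun c => ¬ wtv c = 0)).filter
          (fun c => wtv c = ((2 ^ m - 2 ^ N.card) * 2 ^ (L.card + M.card)) / 2),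
          (X : ℤ[X]) ^ wtv c
        = Polynomial.C ((2 : ℤ) ^ (m + L.card + M.card) - 2 ^ (m - N.card))
            * X ^ (((2 ^ m - 2 ^ N.card) * 2 ^ (L.card + M.card)) / 2) := by
      rw [Finset.sum_congr rfl (fun c hc => by
          rw [(Finset.mem_filter.1 hc).2]), Finset.sum_const, nsmul_eq_mul]
      have hle : 2 ^ (m - N.card) ≤ 2 ^ (m + L.card + M.card) :=
        Nat.pow_le_pow_right (by norm_num) (by omega)
      have hcast : ((((Finset.univ.filter
          (fun c => c ∈ LinearMap.range (codeMap (Δ L) (Δ M) (Δ N)ᶜ))).filter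
            (fun c => ¬ wtv c = 0)).filter
            (fun c => wtv c = ((2 ^ m - 2 ^ N.card) * 2 ^ (L.card + M.card)) / 2)).card : ℤ)
          = (2 : ℤ) ^ (m + L.card + M.card) - 2 ^ (m - N.card) := by
        have hval : (((Finset.univ.filter
            (fun c => c ∈ LinearMap.range (codeMap (Δ L) (Δ M) (Δ N)ᶜ))).filter
              (fun c => ¬ wtv c = 0)).filter
              (fun c => wtv c = ((2 ^ m - 2 ^ N.card) * 2 ^ (L.card + M.card)) / 2)).card
            = 2 ^ (m + L.card + M.card) - 2 ^ (m - N.card) := by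
          have hcnt1' : 1 + ((Finset.univ.filter
              (fun c => c ∈ LinearMap.range (codeMap (Δ L) (Δ M) (Δ N)ᶜ))).filter
                (fun c => ¬ wtv c = 0)).card = 2 ^ (m + L.card + M.card) := hcnt1
          have hcnt2' : (((Finset.univ.filter
              (fun c => c ∈ LinearMap.range (codeMap (Δ L) (Δ M) (Δ N)ᶜ))).filter
                (fun c => ¬ wtv c = 0)).filter
                (fun c => wtv c = ((2 ^ m - 2 ^ N.card) * 2 ^ (L.card + M.card)) / 2)).card
              + (2 ^ (m - N.card) - 1)
              = ((Finset.univ.filter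
              (fun c => c ∈ LinearMap.range (codeMap (Δ L) (Δ M) (Δ N)ᶜ))).filter
                (fun c => ¬ wtv c = 0)).card := hcnt2
          have hge : 1 ≤ 2 ^ (m - N.card) := Nat.one_le_two_pow
          omega
        rw [hval]
        push_cast [hle]
        ring
      rw [← hcast, Polynomial.C_eq_natCast]
    have hsum2 : ∑ c ∈ (Finset.univ.filter
        (fun c => c ∈ LinearMap.range (codeMap (Δ L) (Δ M) (Δ N)ᶜ))).filter
          (fun c => wtv c = 2 ^ (m + L.card + M.card - 1)),
          (X : ℤ[X]) ^ wtv c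
        = Polynomial.C ((2 : ℤ) ^ (m - N.card) - 1)
            * X ^ (2 ^ (m + L.card + M.card - 1)) := by
      rw [Finset.sum_congr rfl (fun c hc => by
          rw [(Finset.mem_filter.1 hc).2]), Finset.sum_const, nsmul_eq_mul]
      have hcast : (((Finset.univ.filter
          (fun c => c ∈ LinearMap.range (codeMap (Δ L) (Δ M) (Δ N)ᶜ))).filter
            (fun c => wtv c = 2 ^ (m + L.card + M.card - 1))).card : ℤ)
          = (2 : ℤ) ^ (m - N.card) - 1 := by
        rw [hS2card]
        have h2t : (1:ℕ) ≤ 2 ^ (m - N.card) := Nat.one_le_two_pow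
        push_cast [h2t]
        ring
      rw [← hcast, Polynomial.C_eq_natCast]
    rw [hsum1, hsum2]
    ring

  · -- part 5 : Griesmer
    have hN1 : 1 ≤ N.card + (L.card + M.card) := by
      rcases Nat.eq_zero_or_pos (L.card + M.card) with h0 | h0
      · have := hNpos h0; omega
      · omega
    have ht1 : 1 ≤ m - N.card := by omega
    have h2t : (1:ℕ) ≤ 2 ^ (m - N.card) := Nat.one_le_two_pow
    have hQ : (((2:ℚ) ^ m - 2 ^ N.card) * 2 ^ (L.card + M.card)) / 2
        = ((2 ^ (N.card + (L.card + M.card) - 1) * (2 ^ (m - N.card) - 1) : ℕ) : ℚ) := by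
      have c1 : (2:ℚ) ^ m = 2 ^ N.card * 2 ^ (m - N.card) := by
        rw [← pow_add]; congr 1; omega
      have c2 : (2:ℚ) ^ N.card * 2 ^ (L.card + M.card)
          = 2 * 2 ^ (N.card + (L.card + M.card) - 1) := by
        rw [← pow_add, ← pow_succ']; congr 1; omega
      rw [div_eq_iff (by norm_num : (2:ℚ) ≠ 0)]
      push_cast [h2t]
      rw [c1]
      linear_combination ((2:ℚ) ^ (m - N.card) - 1) * c2
    have hrange : m + L.card + M.card = (N.card + (L.card + M.card)) + (m - N.card) := by
      omega
    rw [show (((2 ^ m - 2 ^ (N.card : ℕ) : ℚ)) * 2 ^ (L.card + M.card)) / 2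
        = ((2 ^ (N.card + (L.card + M.card) - 1) * (2 ^ (m - N.card) - 1) : ℕ) : ℚ) from hQ,
      hrange, griesmer_sum _ _ hN1 ht1]
    push_cast [h2t]
    have d1 : (2:ℤ) ^ (N.card + (L.card + M.card)) = 2 ^ N.card * 2 ^ (L.card + M.card) := by
      rw [← pow_add]
    have d2 : (2:ℤ) ^ m = 2 ^ N.card * 2 ^ (m - N.card) := by
      rw [← pow_add]; congr 1; omega
    rw [d1, d2]
    ring
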